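/- With A_3 as defined and P_n the n-th Legendre polynomial, for every integer n ≥ 2, ∫₀^π A_3(θ) P_n(cos θ) sin(θ) dθ ≤ 0, and for n = 1 the integral is positive. -/

import Mathlib

open Real

/-- The `n`-th Legendre polynomial, via the Rodrigues formula. -/
noncomputable def legendreP (n : ℕ) : Polynomial ℝ :=
  ((1 : ℝ) / (2^n * n.factorial)) •
    ((fun p => Polynomial.derivative p)^[n] ((Polynomial.X ^ 2 - 1) ^ n))

open Polynomial

namespace Leg
noncomputable def Q (n : ℕ) : Polynomial ℝ := (X ^ 2 - 1) ^ n
noncomputable abbrev D : Polynomial ℝ → Polynomial ℝ := Polynomial.derivative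

@[simp] lemma derivative_intCast (k : ℤ) : D ((k : Polynomial ℝ)) = 0 := by
  unfold D
  rw [show ((k : Polynomial ℝ)) = C ((k:ℝ)) by push_cast; rfl]
  exact Polynomial.derivative_C

lemma derivQ (n : ℕ) : D (Q (n+1)) = ((2*(n+1) : ℤ) : Polynomial ℝ) * (X * Q n) := by
  unfold Q D
  rw [Polynomial.derivative_pow]
  simp only [Polynomial.derivative_sub, Polynomial.derivative_one, Polynomial.derivative_pow,
    Polynomial.derivative_X]
  push_cast [map_add, map_natCast, map_one, map_ofNat]
  ring

lemma iterX (m : ℕ) (p : Polynomial ℝ) :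
    D^[m+1] (X * p) = X * D^[m+1] p + (((m:ℤ)+1 : ℤ) : Polynomial ℝ) * D^[m] p := by
  induction m with
  | zero =>
      simp only [zero_add, Function.iterate_one, Function.iterate_zero, id_eq]
      show Polynomial.derivative _ = _
      simp only [Polynomial.derivative_mul, Polynomial.derivative_X]
      push_cast
      ring
  | succ m ih =>
      rw [Function.iterate_succ_apply', ih]
      show Polynomial.derivative _ = _
      simp only [Polynomial.derivative_add, Polynomial.derivative_mul, Polynomial.derivative_X,
        derivative_intCast]
      rw [← Function.iterate_succ_apply' Polynomial.derivative m p,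
        ← Function.iterate_succ_apply' Polynomial.derivative (m+1) p]
      push_cast
      ring
end Leg

namespace Leg
lemma keyS (n k : ℕ) : (X^2 - 1) * D^[k+1] (Q n) =
    ((2*((n:ℤ)-k) : ℤ) : Polynomial ℝ) * (X * D^[k] (Q n)) +
    (((k:ℤ)*(2*n-k+1) : ℤ) : Polynomial ℝ) * D^[k-1] (Q n) := by
  induction k with
  | zero =>
      simp only [Function.iterate_one, Function.iterate_zero, id_eq, Nat.zero_sub]
      rcases n with _ | m
      · unfold Q; simp
      · rw [show D^[0+1] (Q (m+1)) = D (Q (m+1)) from rfl, derivQ,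
          show Q (m+1) = (X^2-1) * Q m by rw [Q, Q, pow_succ]; ring]
        push_cast
        ring
  | succ k ih =>
      have hd := congrArg Polynomial.derivative ih
      simp only [Nat.succ_eq_add_one, Polynomial.derivative_mul, Polynomial.derivative_add,
        Polynomial.derivative_sub, Polynomial.derivative_one, Polynomial.derivative_pow,
        Polynomial.derivative_X, derivative_intCast, map_natCast, map_ofNat, pow_one, one_mul,
        mul_one, zero_mul, mul_zero, add_zero, zero_add, sub_zero] at hd
      rw [← Function.iterate_succ_apply' Polynomial.derivative (k+1) (Q n),
        ← Function.iterate_succ_apply' Polynomial.derivative k (Q n)] at hd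
      rcases k with _ | j
      · simp only [show ((0:ℕ)-1 : ℕ) = 0 from rfl, show ((0+1-1:ℕ)) = 0 from rfl,
          Function.iterate_zero, id_eq, Nat.cast_zero] at hd ⊢
        push_cast at hd ⊢
        linear_combination hd
      · rw [show (j+1-1 : ℕ) = j from rfl] at hd
        rw [← Function.iterate_succ_apply' Polynomial.derivative j (Q n)] at hd
        rw [show (j+1+1-1 : ℕ) = j+1 from rfl]
        push_cast at hd ⊢
        linear_combination hd
end Leg

namespace Leg

lemma Q_zero : Q 0 = 1 := by simp [Q]

lemma legendreP_eval (n : ℕ) (x : ℝ) :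
    (legendreP n).eval x = (1/(2^n * n.factorial) : ℝ) * (D^[n] (Q n)).eval x := by
  simp [legendreP, Q, Polynomial.eval_smul, smul_eq_mul]

lemma legendreP_deriv_eval (n : ℕ) (x : ℝ) :
    (Polynomial.derivative (legendreP n)).eval x
      = (1/(2^n * n.factorial) : ℝ) * (D^[n+1] (Q n)).eval x := by
  have : Polynomial.derivative (legendreP n)
      = ((1:ℝ)/(2^n * n.factorial)) • (D^[n+1] (Q n)) := by
    rw [legendreP, Polynomial.derivative_smul, ← Function.iterate_succ_apply' Polynomial.derivative]
    rfl
  rw [this]; simp [Polynomial.eval_smul, smul_eq_mul]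

lemma fact_ne (n : ℕ) : ((2:ℝ)^n * n.factorial) ≠ 0 := by
  have := n.factorial_pos
  positivity

lemma fact_succ (n : ℕ) : ((2:ℝ)^(n+1) * (n+1).factorial) = (2^n * n.factorial) * (2*(n+1)) := by
  rw [Nat.factorial_succ]
  push_cast
  ring

lemma castMul (k : ℤ) (p : Polynomial ℝ) :
    ((k : Polynomial ℝ)) * p = ((k:ℝ)) • p := by
  rw [Polynomial.smul_eq_C_mul]
  simp [Polynomial.C_eq_intCast]

lemma iterD_cast (m : ℕ) (k : ℤ) (p : Polynomial ℝ) :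
    D^[m] (((k : Polynomial ℝ)) * p) = ((k : Polynomial ℝ)) * D^[m] p := by
  rw [castMul, Polynomial.iterate_derivative_smul, castMul]

-- E1 : eval of D^[n+2] Q (n+1)
lemma E1 (n : ℕ) (x : ℝ) :
    (D^[n+2] (Q (n+1))).eval x
      = 2*((n:ℝ)+1) * (x * (D^[n+1] (Q n)).eval x + ((n:ℝ)+1) * (D^[n] (Q n)).eval x) := by
  have h : D^[n+2] (Q (n+1)) = D^[n+1] (D (Q (n+1))) := Function.iterate_succ_apply D (n+1) _
  rw [h, derivQ, iterD_cast, iterX n (Q n)]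
  simp only [Polynomial.eval_mul, Polynomial.eval_add, Polynomial.eval_X, Polynomial.eval_intCast]
  push_cast
  ring

-- E3 : eval of D^[m+2] Q (m+2)
lemma E3 (m : ℕ) (x : ℝ) :
    (D^[m+2] (Q (m+2))).eval x
      = 2*((m:ℝ)+2) * (x * (D^[m+1] (Q (m+1))).eval x + ((m:ℝ)+1) * (D^[m] (Q (m+1))).eval x) := by
  have h : D^[m+2] (Q (m+2)) = D^[m+1] (D (Q (m+2))) := Function.iterate_succ_apply D (m+1) _
  rw [h, derivQ, iterD_cast, iterX m (Q (m+1))]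
  simp only [Polynomial.eval_mul, Polynomial.eval_add, Polynomial.eval_X, Polynomial.eval_intCast]
  push_cast
  ring

-- E2 (star) : (x²−1) eval D^[n+1] Q n = n(n+1) eval D^[n−1] Q n
lemma E2 (n : ℕ) (x : ℝ) :
    (x^2 - 1) * (D^[n+1] (Q n)).eval x
      = (n:ℝ)*((n:ℝ)+1) * (D^[n-1] (Q n)).eval x := by
  have h := congrArg (Polynomial.eval x) (keyS n n)
  simp only [Polynomial.eval_mul, Polynomial.eval_add, Polynomial.eval_sub, Polynomial.eval_pow,
    Polynomial.eval_one, Polynomial.eval_X, Polynomial.eval_intCast] at h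
  push_cast at h
  linear_combination h

end Leg

namespace Leg

lemma legendreP_zero : legendreP 0 = 1 := by
  simp [legendreP]

lemma legendreP_one : legendreP 1 = X := by
  unfold legendreP
  simp only [pow_one, Nat.factorial_one, Nat.cast_one, mul_one, Function.iterate_one]
  show ((1:ℝ)/2) • Polynomial.derivative ((X:Polynomial ℝ)^2 - 1) = X
  simp only [Polynomial.derivative_sub, Polynomial.derivative_one, Polynomial.derivative_pow,
    Polynomial.derivative_X, sub_zero, pow_one, mul_one]
  rw [Polynomial.smul_eq_C_mul]
  norm_num [← mul_assoc, ← Polynomial.C_mul]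

-- Bonnet A (eval form)
lemma evalA (n : ℕ) (x : ℝ) :
    (Polynomial.derivative (legendreP (n+1))).eval x
      = x * (Polynomial.derivative (legendreP n)).eval x + ((n:ℝ)+1) * (legendreP n).eval x := by
  rw [legendreP_deriv_eval, legendreP_deriv_eval, legendreP_eval, E1, fact_succ]
  have h1 := fact_ne n
  field_simp

-- Bonnet B (eval form)
lemma evalB (n : ℕ) (x : ℝ) :
    x * (Polynomial.derivative (legendreP (n+1))).eval x
      = (Polynomial.derivative (legendreP n)).eval x + ((n:ℝ)+1) * (legendreP (n+1)).eval x := by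
  rcases n with _ | m
  · simp [legendreP_zero, legendreP_one]
  · rw [legendreP_deriv_eval (m+2), legendreP_deriv_eval (m+1), legendreP_eval (m+2)]
    rw [show (m+2+1:ℕ) = m+3 from rfl, show (m+1+1:ℕ) = m+2 from rfl]
    have h1 := E1 (m+1) x
    have h2 := E2 (m+1) x
    have h3 := E3 m x
    rw [show (m+1+2 : ℕ) = m+3 from rfl, show (m+1+1 : ℕ) = m+2 from rfl] at h1
    rw [show (m+1+1 : ℕ) = m+2 from rfl, show (m+1-1 : ℕ) = m from rfl] at h2
    generalize hA : (D^[m+3] (Q (m+2))).eval x = A at h1 ⊢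
    generalize hB : (D^[m+2] (Q (m+2))).eval x = B at h3 ⊢
    generalize hC : (D^[m+2] (Q (m+1))).eval x = Cc at h1 h2 ⊢
    generalize hD : (D^[m+1] (Q (m+1))).eval x = Dd at h1 h3 ⊢
    generalize hE : (D^[m] (Q (m+1))).eval x = Ee at h2 h3 ⊢
    have hfact : ((m+2).factorial : ℝ) = ((m:ℝ)+2) * (((m:ℝ)+1) * (m.factorial : ℝ)) := by
      rw [Nat.factorial_succ, Nat.factorial_succ]; push_cast; ring
    have hfact1 : ((m+1).factorial : ℝ) = ((m:ℝ)+1) * (m.factorial : ℝ) := by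
      rw [Nat.factorial_succ]; push_cast; ring
    rw [hfact, hfact1]
    have h4 : ((2:ℝ)^m * m.factorial) ≠ 0 := fact_ne m
    have h5 : ((m:ℝ)+1) ≠ 0 := by positivity
    have h6 : ((m:ℝ)+2) ≠ 0 := by positivity
    push_cast at h1 h2 h3 ⊢
    have key2 : x * A = 2*((m:ℝ)+2) * Cc + ((m:ℝ)+2) * B := by
      linear_combination x * h1 + 2*((m:ℝ)+2) * h2 - ((m:ℝ)+2) * h3
    have hs : 2*((m:ℝ)+2)/(2^(m+2)*(((m:ℝ)+2)*(((m:ℝ)+1)*(m.factorial:ℝ))))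
        = 1/(2^(m+1)*(((m:ℝ)+1)*(m.factorial:ℝ))) := by
      rw [div_eq_div_iff (by positivity) (by positivity)]
      ring
    linear_combination (1/(2^(m+2)*(((m:ℝ)+2)*(((m:ℝ)+1)*(m.factorial:ℝ))))) * key2 + Cc * hs
end Leg

namespace Leg

-- divisibility of iterated derivatives
lemma iterDvd (n k : ℕ) : ∃ r : Polynomial ℝ, D^[k] (Q n) = (X^2-1)^(n-k) * r := by
  induction k with
  | zero => exact ⟨1, by simp [Q]⟩
  | succ k ih =>
      obtain ⟨r, hr⟩ := ih
      rcases Nat.lt_or_ge k n with h | h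
      · -- n - k = (n-k-1)+1 with n-k-1 = n-(k+1)
        have hnk : n - k = (n - (k+1)) + 1 := by omega
        refine ⟨((n-k : ℕ) : Polynomial ℝ) * (2*X) * r + (X^2-1) * Polynomial.derivative r, ?_⟩
        rw [Function.iterate_succ_apply', hr]
        show Polynomial.derivative _ = _
        rw [Polynomial.derivative_mul, Polynomial.derivative_pow]
        simp only [Polynomial.derivative_sub, Polynomial.derivative_one, Polynomial.derivative_pow,
          Polynomial.derivative_X, sub_zero, mul_one, pow_one]
        rw [hnk]
        rw [show ((n - (k+1)) + 1 - 1 : ℕ) = n - (k+1) from rfl]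
        push_cast [map_add, map_natCast, map_one, map_ofNat]
        ring
      · refine ⟨Polynomial.derivative r, ?_⟩
        have h1 : n - k = 0 := by omega
        have h2 : n - (k+1) = 0 := by omega
        rw [Function.iterate_succ_apply', hr, h1, h2]
        show Polynomial.derivative _ = _
        simp

lemma iterZero (n k : ℕ) (hk : k < n) (a : ℝ) (ha : a^2 = 1) :
    (D^[k] (Q n)).eval a = 0 := by
  obtain ⟨r, hr⟩ := iterDvd n k
  rw [hr]
  simp only [Polynomial.eval_mul, Polynomial.eval_pow, Polynomial.eval_sub, Polynomial.eval_one,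
    Polynomial.eval_X]
  rw [ha]
  simp [Nat.sub_ne_zero_of_lt hk, zero_pow]

-- P_{n+1}(a) = a * P_n(a) for a² = 1
lemma evalPM (a : ℝ) (ha : a^2 = 1) (n : ℕ) :
    (legendreP (n+1)).eval a = a * (legendreP n).eval a := by
  rcases n with _ | m
  · simp [legendreP_zero, legendreP_one]
  · rw [legendreP_eval (m+2), legendreP_eval (m+1), E3 m a, iterZero (m+1) m (by omega) a ha,
      fact_succ (m+1)]
    have := fact_ne (m+1)
    field_simp
    push_cast; ring

lemma evalP_one (n : ℕ) : (legendreP n).eval 1 = 1 := by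
  induction n with
  | zero => simp [legendreP_zero]
  | succ m ih => rw [evalPM 1 (by norm_num) m, ih, mul_one]

lemma evalP_negone (n : ℕ) : (legendreP n).eval (-1) = (-1)^n := by
  induction n with
  | zero => simp [legendreP_zero]
  | succ m ih => rw [evalPM (-1) (by norm_num) m, ih]; ring

-- reflection
lemma compIter (k : ℕ) (p : Polynomial ℝ) :
    D^[k] (p.comp (-X)) = ((-1:ℝ)^k) • ((D^[k] p).comp (-X)) := by
  induction k generalizing p with
  | zero => simp
  | succ k ih =>
      rw [Function.iterate_succ_apply, Function.iterate_succ_apply]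
      have hD : D (p.comp (-X)) = ((-1:ℝ)) • ((D p).comp (-X)) := by
        show Polynomial.derivative _ = _
        rw [Polynomial.derivative_comp]
        simp [Polynomial.smul_eq_C_mul]
      rw [hD]
      rw [show ((-1:ℝ)) • ((D p).comp (-X)) = ((-1:ℝ)^1) • ((D p).comp (-X)) by norm_num]
      rw [Polynomial.iterate_derivative_smul, ih (D p)]
      rw [smul_smul, pow_succ]
      ring_nf
lemma Qcomp (n : ℕ) : (Q n).comp (-X) = Q n := by
  unfold Q
  simp only [Polynomial.pow_comp, Polynomial.sub_comp, Polynomial.one_comp, Polynomial.pow_comp,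
    Polynomial.X_comp]
  ring_nf

lemma evalP_neg (n : ℕ) (x : ℝ) :
    (legendreP n).eval (-x) = (-1)^n * (legendreP n).eval x := by
  have h := compIter n (Q n)
  rw [Qcomp] at h
  have h2 : (D^[n] (Q n)).comp (-X) = ((-1:ℝ)^n) • (D^[n] (Q n)) := by
    have := congrArg (fun p => ((-1:ℝ)^n) • p) h
    simp only [smul_smul] at this
    rw [show ((-1:ℝ)^n * (-1:ℝ)^n) = 1 by rw [← mul_pow]; norm_num] at this
    rw [one_smul] at this
    exact this.symm
  rw [legendreP_eval, legendreP_eval]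
  have h3 : (D^[n] (Q n)).eval (-x) = ((D^[n] (Q n)).comp (-X)).eval x := by
    simp [Polynomial.eval_comp]
  rw [h3, h2]
  simp [Polynomial.eval_smul, smul_eq_mul]
  ring
end Leg

namespace Leg
open intervalIntegral

-- combined identity I⁻
lemma Iminus (n : ℕ) (x : ℝ) :
    (1-x) * ((Polynomial.derivative (legendreP (n+1))).eval x
              + (Polynomial.derivative (legendreP n)).eval x)
      = ((n:ℝ)+1) * ((legendreP n).eval x - (legendreP (n+1)).eval x) := by
  linear_combination evalA n x - evalB n x

lemma contP (n : ℕ) : Continuous (fun x : ℝ => (legendreP n).eval x) :=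
  (legendreP n).continuous

noncomputable def J0 (n : ℕ) : ℝ := ∫ x in (-1:ℝ)..1, (legendreP n).eval x
noncomputable def J1 (n : ℕ) : ℝ := ∫ x in (-1:ℝ)..1, Real.sqrt (1-x) * (legendreP n).eval x
noncomputable def J3 (n : ℕ) : ℝ :=
  ∫ x in (-1:ℝ)..1, (1-x) * Real.sqrt (1-x) * (legendreP n).eval x

lemma ftc (f F : ℝ → ℝ) (hF : ContinuousOn F (Set.Icc (-1) 1))
    (hd : ∀ x ∈ Set.Ioo (-1:ℝ) 1, HasDerivAt F (f x) x) (hf : Continuous f) :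
    ∫ x in (-1:ℝ)..1, f x = F 1 - F (-1) :=
  intervalIntegral.integral_eq_sub_of_hasDerivAt_of_le (by norm_num) hF hd
    (hf.intervalIntegrable _ _)

lemma sqrt1x_hasDeriv {x : ℝ} (hx : x < 1) :
    HasDerivAt (fun y : ℝ => Real.sqrt (1-y)) (-(1/(2*Real.sqrt (1-x)))) x := by
  have h1 : HasDerivAt (fun y : ℝ => 1-y) (-1) x := by
    simpa using (hasDerivAt_id x).const_sub 1
  have h2 := (Real.hasDerivAt_sqrt (by linarith : (1:ℝ)-x ≠ 0)).comp x h1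
  refine h2.congr_deriv (Eq.symm ?_)
  ring

lemma sqrt1x_pos {x : ℝ} (hx : x < 1) : 0 < Real.sqrt (1-x) :=
  Real.sqrt_pos.mpr (by linarith)

lemma sq_sqrt1x {x : ℝ} (hx : x ≤ 1) : Real.sqrt (1-x) ^ 2 = 1-x := by
  rw [sq]
  exact Real.mul_self_sqrt (by linarith)

-- derivative of (1-x)*sqrt(1-x)
lemma w3_hasDeriv {x : ℝ} (hx : x < 1) :
    HasDerivAt (fun y : ℝ => (1-y) * Real.sqrt (1-y)) (-(3/2) * Real.sqrt (1-x)) x := by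
  have h1 : HasDerivAt (fun y : ℝ => 1-y) (-1) x := by
    simpa using (hasDerivAt_id x).const_sub 1
  have h2 := h1.mul (sqrt1x_hasDeriv hx)
  refine h2.congr_deriv (Eq.symm ?_)
  have hs := sqrt1x_pos hx
  have hss := sq_sqrt1x hx.le
  have key : (1-x) * (1/(2*Real.sqrt (1-x))) = Real.sqrt (1-x)/2 := by
    have hs' : Real.sqrt (1-x) ≠ 0 := ne_of_gt hs
    field_simp
    linear_combination -hss
  linear_combination key

-- derivative of (1-x)^2*sqrt(1-x)
lemma w5_hasDeriv {x : ℝ} (hx : x < 1) :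
    HasDerivAt (fun y : ℝ => (1-y)^2 * Real.sqrt (1-y)) (-(5/2) * (1-x) * Real.sqrt (1-x)) x := by
  have h1 : HasDerivAt (fun y : ℝ => 1-y) (-1) x := by
    simpa using (hasDerivAt_id x).const_sub 1
  have h2 := ((h1.pow 2).mul (sqrt1x_hasDeriv hx))
  refine h2.congr_deriv (Eq.symm ?_)
  have hs := sqrt1x_pos hx
  have hss := sq_sqrt1x hx.le
  have key : (1-x) * (1/(2*Real.sqrt (1-x))) = Real.sqrt (1-x)/2 := by
    have hs' : Real.sqrt (1-x) ≠ 0 := ne_of_gt hs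
    field_simp
    linear_combination -hss
  simp only [Pi.pow_apply]
  linear_combination (1-x) * key

end Leg

namespace Leg

lemma contS : Continuous (fun x : ℝ => Real.sqrt (1-x)) :=
  Real.continuous_sqrt.comp (continuous_const.sub continuous_id)

lemma contS' : Continuous (fun x : ℝ => Real.sqrt (1+x)) :=
  Real.continuous_sqrt.comp (continuous_const.add continuous_id)

lemma cont1x : Continuous (fun x : ℝ => (1:ℝ)-x) := continuous_const.sub continuous_id

lemma boundary_zero (n : ℕ) :
    (legendreP (n+1)).eval (-1 : ℝ) + (legendreP n).eval (-1) = 0 := by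
  rw [evalP_negone, evalP_negone]
  ring

-- rJ0
lemma rJ0 (n : ℕ) : ((n:ℝ)+2) * J0 (n+1) = (n:ℝ) * J0 n := by
  have hF : ∀ x ∈ Set.Ioo (-1:ℝ) 1, HasDerivAt
      (fun y => (1-y) * ((legendreP (n+1)).eval y + (legendreP n).eval y))
      ((n:ℝ) * (legendreP n).eval x - ((n:ℝ)+2) * (legendreP (n+1)).eval x) x := by
    intro x _
    have h1 : HasDerivAt (fun y : ℝ => 1-y) (-1) x := by
      simpa using (hasDerivAt_id x).const_sub 1
    have h2 : HasDerivAt (fun y : ℝ => (legendreP (n+1)).eval y + (legendreP n).eval y)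
        ((Polynomial.derivative (legendreP (n+1))).eval x
          + (Polynomial.derivative (legendreP n)).eval x) x :=
      ((legendreP (n+1)).hasDerivAt x).add ((legendreP n).hasDerivAt x)
    have h3 := h1.mul h2
    refine h3.congr_deriv (Eq.symm ?_)
    linear_combination - Iminus n x
  have hI := ftc _ _ (Continuous.continuousOn (cont1x.mul ((contP (n+1)).add (contP n)))) hF
    ((continuous_const.mul (contP n)).sub (continuous_const.mul (contP (n+1))))
  simp only [Pi.mul_apply, Pi.add_apply, Pi.pow_apply] at hI
  rw [show ((1:ℝ)-1) * ((legendreP (n+1)).eval 1 + (legendreP n).eval 1) = 0 by ring,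
    show ((1:ℝ)-(-1)) * ((legendreP (n+1)).eval (-1) + (legendreP n).eval (-1)) = 0 by
      rw [boundary_zero]; ring] at hI
  have hsplit : (∫ x in (-1:ℝ)..1,
      ((n:ℝ) * (legendreP n).eval x - ((n:ℝ)+2) * (legendreP (n+1)).eval x))
      = (n:ℝ) * J0 n - ((n:ℝ)+2) * J0 (n+1) := by
    rw [intervalIntegral.integral_sub (f := fun x => (n:ℝ) * (legendreP n).eval x)
        (g := fun x => ((n:ℝ)+2) * (legendreP (n+1)).eval x)
        ((continuous_const.mul (contP n)).intervalIntegrable _ _)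
        ((continuous_const.mul (contP (n+1))).intervalIntegrable _ _),
      intervalIntegral.integral_const_mul, intervalIntegral.integral_const_mul]
    rfl
  rw [hsplit] at hI
  linarith [hI]

-- rJ1
lemma rJ1 (n : ℕ) : ((n:ℝ)+5/2) * J1 (n+1) = ((n:ℝ)-1/2) * J1 n := by
  have hF : ∀ x ∈ Set.Ioo (-1:ℝ) 1, HasDerivAt
      (fun y => (1-y) * Real.sqrt (1-y) * ((legendreP (n+1)).eval y + (legendreP n).eval y))
      (Real.sqrt (1-x) * (((n:ℝ)-1/2) * (legendreP n).eval x
        - ((n:ℝ)+5/2) * (legendreP (n+1)).eval x)) x := by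
    intro x hx
    have h1 := w3_hasDeriv hx.2
    have h2 : HasDerivAt (fun y : ℝ => (legendreP (n+1)).eval y + (legendreP n).eval y)
        ((Polynomial.derivative (legendreP (n+1))).eval x
          + (Polynomial.derivative (legendreP n)).eval x) x :=
      ((legendreP (n+1)).hasDerivAt x).add ((legendreP n).hasDerivAt x)
    have h3 := h1.mul h2
    refine h3.congr_deriv (Eq.symm ?_)
    have hss := sq_sqrt1x hx.2.le
    have hI := Iminus n x
    linear_combination (- Real.sqrt (1-x)) * hI
  have hI := ftc _ _ (Continuous.continuousOn ((cont1x.mul contS).mul ((contP (n+1)).add (contP n)))) hF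
    (contS.mul ((continuous_const.mul (contP n)).sub (continuous_const.mul (contP (n+1)))))
  simp only [Pi.mul_apply, Pi.add_apply, Pi.pow_apply] at hI
  rw [show ((1:ℝ)-1) * Real.sqrt (1-1) * ((legendreP (n+1)).eval 1 + (legendreP n).eval 1) = 0
      by ring,
    show ((1:ℝ)-(-1)) * Real.sqrt (1-(-1)) *
        ((legendreP (n+1)).eval (-1) + (legendreP n).eval (-1)) = 0 by
      rw [boundary_zero]; ring] at hI
  have hsplit : (∫ x in (-1:ℝ)..1, Real.sqrt (1-x) * (((n:ℝ)-1/2) * (legendreP n).eval x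
        - ((n:ℝ)+5/2) * (legendreP (n+1)).eval x))
      = ((n:ℝ)-1/2) * J1 n - ((n:ℝ)+5/2) * J1 (n+1) := by
    have heq : ∀ x : ℝ, Real.sqrt (1-x) * (((n:ℝ)-1/2) * (legendreP n).eval x
        - ((n:ℝ)+5/2) * (legendreP (n+1)).eval x)
        = ((n:ℝ)-1/2) * (Real.sqrt (1-x) * (legendreP n).eval x)
          - ((n:ℝ)+5/2) * (Real.sqrt (1-x) * (legendreP (n+1)).eval x) := fun x => by ring
    simp_rw [heq]
    rw [intervalIntegral.integral_sub (f := fun x => ((n:ℝ)-1/2) * (Real.sqrt (1-x) * (legendreP n).eval x))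
        (g := fun x => ((n:ℝ)+5/2) * (Real.sqrt (1-x) * (legendreP (n+1)).eval x))
        ((continuous_const.mul (contS.mul (contP n))).intervalIntegrable _ _)
        ((continuous_const.mul (contS.mul (contP (n+1)))).intervalIntegrable _ _),
      intervalIntegral.integral_const_mul, intervalIntegral.integral_const_mul]
    rfl
  rw [hsplit] at hI
  linarith [hI]

-- rJ3
lemma rJ3 (n : ℕ) : ((n:ℝ)+7/2) * J3 (n+1) = ((n:ℝ)-3/2) * J3 n := by
  have hF : ∀ x ∈ Set.Ioo (-1:ℝ) 1, HasDerivAt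
      (fun y => (1-y)^2 * Real.sqrt (1-y) * ((legendreP (n+1)).eval y + (legendreP n).eval y))
      ((1-x) * Real.sqrt (1-x) * (((n:ℝ)-3/2) * (legendreP n).eval x
        - ((n:ℝ)+7/2) * (legendreP (n+1)).eval x)) x := by
    intro x hx
    have h1 := w5_hasDeriv hx.2
    have h2 : HasDerivAt (fun y : ℝ => (legendreP (n+1)).eval y + (legendreP n).eval y)
        ((Polynomial.derivative (legendreP (n+1))).eval x
          + (Polynomial.derivative (legendreP n)).eval x) x :=
      ((legendreP (n+1)).hasDerivAt x).add ((legendreP n).hasDerivAt x)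
    have h3 := h1.mul h2
    refine h3.congr_deriv (Eq.symm ?_)
    have hI := Iminus n x
    linear_combination (- (1-x) * Real.sqrt (1-x)) * hI
  have hI := ftc _ _ (Continuous.continuousOn (((cont1x.pow 2).mul contS).mul ((contP (n+1)).add (contP n)))) hF
    ((cont1x.mul contS).mul ((continuous_const.mul (contP n)).sub (continuous_const.mul (contP (n+1)))))
  simp only [Pi.mul_apply, Pi.add_apply, Pi.pow_apply] at hI
  rw [show ((1:ℝ)-1)^2 * Real.sqrt (1-1) * ((legendreP (n+1)).eval 1 + (legendreP n).eval 1) = 0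
      by ring,
    show ((1:ℝ)-(-1))^2 * Real.sqrt (1-(-1)) *
        ((legendreP (n+1)).eval (-1) + (legendreP n).eval (-1)) = 0 by
      rw [boundary_zero]; ring] at hI
  have hsplit : (∫ x in (-1:ℝ)..1, (1-x) * Real.sqrt (1-x) * (((n:ℝ)-3/2) * (legendreP n).eval x
        - ((n:ℝ)+7/2) * (legendreP (n+1)).eval x))
      = ((n:ℝ)-3/2) * J3 n - ((n:ℝ)+7/2) * J3 (n+1) := by
    have heq : ∀ x : ℝ, (1-x) * Real.sqrt (1-x) * (((n:ℝ)-3/2) * (legendreP n).eval x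
        - ((n:ℝ)+7/2) * (legendreP (n+1)).eval x)
        = ((n:ℝ)-3/2) * ((1-x) * Real.sqrt (1-x) * (legendreP n).eval x)
          - ((n:ℝ)+7/2) * ((1-x) * Real.sqrt (1-x) * (legendreP (n+1)).eval x) := fun x => by ring
    simp_rw [heq]
    rw [intervalIntegral.integral_sub
        (f := fun x => ((n:ℝ)-3/2) * ((1-x) * Real.sqrt (1-x) * (legendreP n).eval x))
        (g := fun x => ((n:ℝ)+7/2) * ((1-x) * Real.sqrt (1-x) * (legendreP (n+1)).eval x))
        ((continuous_const.mul ((cont1x.mul contS).mul (contP n))).intervalIntegrable _ _)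
        ((continuous_const.mul ((cont1x.mul contS).mul (contP (n+1)))).intervalIntegrable _ _),
      intervalIntegral.integral_const_mul, intervalIntegral.integral_const_mul]
    rfl
  rw [hsplit] at hI
  linarith [hI]

end Leg

namespace Leg
open intervalIntegral

lemma J0_one : J0 1 = 0 := by
  unfold J0
  rw [legendreP_one]
  simp only [Polynomial.eval_X]
  rw [integral_id]
  norm_num

lemma J1_one : J1 1 = -(4*Real.sqrt 2/15) := by
  unfold J1
  rw [legendreP_one]
  simp only [Polynomial.eval_X]
  have hF : ∀ x ∈ Set.Ioo (-1:ℝ) 1, HasDerivAt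
      (fun y => Real.sqrt (1-y) * ((2/5)*(1-y)^2 - (2/3)*(1-y)))
      (Real.sqrt (1-x) * x) x := by
    intro x hx
    have h1 := sqrt1x_hasDeriv hx.2
    have h2 : HasDerivAt (fun y : ℝ => (2/5)*(1-y)^2 - (2/3)*(1-y))
        (-(4/5)*(1-x) + 2/3) x := by
      have hb : HasDerivAt (fun y : ℝ => 1-y) (-1) x := by
        simpa using (hasDerivAt_id x).const_sub 1
      have := (hb.pow 2).const_mul (2/5:ℝ) |>.sub (hb.const_mul (2/3:ℝ))
      refine this.congr_deriv (Eq.symm ?_)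
      push_cast
      ring
    have h3 := h1.mul h2
    refine h3.congr_deriv (Eq.symm ?_)
    have hs := sqrt1x_pos hx.2
    have hss := sq_sqrt1x hx.2.le
    set t := Real.sqrt (1-x) with ht
    have hts : t ≠ 0 := ne_of_gt hs
    have hxe : x = 1 - t^2 := by linarith
    rw [hxe]
    field_simp
    ring
  have hI := ftc _ _ (Continuous.continuousOn (contS.mul (by continuity))) hF
    (contS.mul continuous_id)
  simp only [Pi.mul_apply, Pi.add_apply, Pi.pow_apply] at hI
  rw [hI]
  rw [show ((1:ℝ)-1) = 0 by norm_num]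
  rw [show ((1:ℝ)-(-1)) = 2 by norm_num]
  simp [Real.sqrt_zero]
  ring

lemma J3_one : J3 1 = -(24*Real.sqrt 2/35) := by
  unfold J3
  rw [legendreP_one]
  simp only [Polynomial.eval_X]
  have hF : ∀ x ∈ Set.Ioo (-1:ℝ) 1, HasDerivAt
      (fun y => Real.sqrt (1-y) * ((2/7)*(1-y)^3 - (2/5)*(1-y)^2))
      ((1-x) * Real.sqrt (1-x) * x) x := by
    intro x hx
    have h1 := sqrt1x_hasDeriv hx.2
    have h2 : HasDerivAt (fun y : ℝ => (2/7)*(1-y)^3 - (2/5)*(1-y)^2)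
        (-(6/7)*(1-x)^2 + (4/5)*(1-x)) x := by
      have hb : HasDerivAt (fun y : ℝ => 1-y) (-1) x := by
        simpa using (hasDerivAt_id x).const_sub 1
      have := (hb.pow 3).const_mul (2/7:ℝ) |>.sub ((hb.pow 2).const_mul (2/5:ℝ))
      refine this.congr_deriv (Eq.symm ?_)
      push_cast
      ring
    have h3 := h1.mul h2
    refine h3.congr_deriv (Eq.symm ?_)
    have hs := sqrt1x_pos hx.2
    have hss := sq_sqrt1x hx.2.le
    set t := Real.sqrt (1-x) with ht
    have hts : t ≠ 0 := ne_of_gt hs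
    have hxe : x = 1 - t^2 := by linarith
    rw [hxe]
    field_simp
    ring
  have hI := ftc _ _ (Continuous.continuousOn (contS.mul (by continuity))) hF
    ((cont1x.mul contS).mul continuous_id)
  simp only [Pi.mul_apply, Pi.add_apply, Pi.pow_apply] at hI
  rw [hI]
  rw [show ((1:ℝ)-1) = 0 by norm_num]
  rw [show ((1:ℝ)-(-1)) = 2 by norm_num]
  simp [Real.sqrt_zero]
  ring

end Leg

namespace Leg
open intervalIntegral

lemma cJ0 (n : ℕ) (hn : 1 ≤ n) : J0 n = 0 := by
  induction n, hn using Nat.le_induction with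
  | base => exact J0_one
  | succ n hn ih =>
      have hr := rJ0 n
      rw [ih, mul_zero] at hr
      have h2 : ((n:ℝ)+2) ≠ 0 := by positivity
      have := mul_eq_zero.mp hr
      tauto

lemma cJ1 (n : ℕ) (hn : 1 ≤ n) :
    J1 n * ((2*(n:ℝ)-1)*(2*(n:ℝ)+1)*(2*(n:ℝ)+3)) = -(4*Real.sqrt 2) := by
  induction n, hn using Nat.le_induction with
  | base => rw [J1_one]; push_cast; ring
  | succ n hn ih =>
      have hr := rJ1 n
      push_cast
      linear_combination (2*((2*(n:ℝ)+1)*(2*(n:ℝ)+3))) * hr + ih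

lemma cJ3 (n : ℕ) (hn : 1 ≤ n) :
    J3 n * ((2*(n:ℝ)-3)*(2*(n:ℝ)-1)*(2*(n:ℝ)+1)*(2*(n:ℝ)+3)*(2*(n:ℝ)+5)) = 72*Real.sqrt 2 := by
  induction n, hn using Nat.le_induction with
  | base => rw [J3_one]; push_cast; ring
  | succ n hn ih =>
      have hr := rJ3 n
      push_cast
      linear_combination (2*((2*(n:ℝ)-1)*(2*(n:ℝ)+1)*(2*(n:ℝ)+3)*(2*(n:ℝ)+5))) * hr + ih

lemma K1_eq (n : ℕ) :
    (∫ x in (-1:ℝ)..1, Real.sqrt (1+x) * (legendreP n).eval x) = (-1)^n * J1 n := by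
  have hptw : ∀ x : ℝ, Real.sqrt (1+x) * (legendreP n).eval x
      = (fun y => Real.sqrt (1-y) * ((-1:ℝ)^n * (legendreP n).eval y)) (-x) := by
    intro x
    simp only [sub_neg_eq_add]
    rw [evalP_neg]
    have hsq : ((-1:ℝ))^n * (-1:ℝ)^n = 1 := by rw [← mul_pow]; norm_num
    linear_combination (-(Real.sqrt (1+x) * (legendreP n).eval x)) * hsq
  have h1 : (∫ x in (-1:ℝ)..1, Real.sqrt (1+x) * (legendreP n).eval x)
      = ∫ x in (-1:ℝ)..1, (fun y => Real.sqrt (1-y) * ((-1:ℝ)^n * (legendreP n).eval y)) (-x) := by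
    apply intervalIntegral.integral_congr
    intro x _
    exact hptw x
  rw [h1, intervalIntegral.integral_comp_neg
    (fun y => Real.sqrt (1-y) * ((-1:ℝ)^n * (legendreP n).eval y))]
  norm_num
  have h2 : ∀ x : ℝ, Real.sqrt (1-x) * ((-1:ℝ)^n * (legendreP n).eval x)
      = (-1:ℝ)^n * (Real.sqrt (1-x) * (legendreP n).eval x) := fun x => by ring
  simp_rw [h2]
  rw [intervalIntegral.integral_const_mul]
  rfl

lemma K3_eq (n : ℕ) :
    (∫ x in (-1:ℝ)..1, (1+x) * Real.sqrt (1+x) * (legendreP n).eval x) = (-1)^n * J3 n := by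
  have hptw : ∀ x : ℝ, (1+x) * Real.sqrt (1+x) * (legendreP n).eval x
      = (fun y => (1-y) * Real.sqrt (1-y) * ((-1:ℝ)^n * (legendreP n).eval y)) (-x) := by
    intro x
    simp only [sub_neg_eq_add]
    rw [evalP_neg]
    have hsq : ((-1:ℝ))^n * (-1:ℝ)^n = 1 := by rw [← mul_pow]; norm_num
    linear_combination (-((1+x) * Real.sqrt (1+x) * (legendreP n).eval x)) * hsq
  have h1 : (∫ x in (-1:ℝ)..1, (1+x) * Real.sqrt (1+x) * (legendreP n).eval x)
      = ∫ x in (-1:ℝ)..1,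
          (fun y => (1-y) * Real.sqrt (1-y) * ((-1:ℝ)^n * (legendreP n).eval y)) (-x) := by
    apply intervalIntegral.integral_congr
    intro x _
    exact hptw x
  rw [h1, intervalIntegral.integral_comp_neg
    (fun y => (1-y) * Real.sqrt (1-y) * ((-1:ℝ)^n * (legendreP n).eval y))]
  norm_num
  have h2 : ∀ x : ℝ, (1-x) * Real.sqrt (1-x) * ((-1:ℝ)^n * (legendreP n).eval x)
      = (-1:ℝ)^n * ((1-x) * Real.sqrt (1-x) * (legendreP n).eval x) := fun x => by ring
  simp_rw [h2]
  rw [intervalIntegral.integral_const_mul]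
  rfl

lemma subst_cos (f : ℝ → ℝ) (hf : Continuous f) :
    (∫ θ in (0:ℝ)..Real.pi, f (Real.cos θ) * Real.sin θ) = ∫ x in (-1:ℝ)..1, f x := by
  have h := intervalIntegral.integral_comp_smul_deriv
    (f := Real.cos) (f' := fun θ => -Real.sin θ) (g := f) (a := 0) (b := Real.pi)
    (fun x _ => (Real.hasDerivAt_cos x))
    ((Real.continuous_sin.neg).continuousOn)
    hf
  rw [Real.cos_zero, Real.cos_pi] at h
  have h2 : (∫ θ in (0:ℝ)..Real.pi, (-Real.sin θ) • (f ∘ Real.cos) θ)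
      = - ∫ θ in (0:ℝ)..Real.pi, f (Real.cos θ) * Real.sin θ := by
    rw [← intervalIntegral.integral_neg]
    apply intervalIntegral.integral_congr
    intro x _
    simp [smul_eq_mul, Function.comp]
    ring
  rw [h2] at h
  rw [intervalIntegral.integral_symm (a := -1) (b := 1)] at h
  linarith [h]

end Leg

namespace Leg
open Real

noncomputable def base (x : ℝ) : ℝ :=
  π*(-2/3) + π/6 * Real.sqrt ((1+x)/2) * (5 - x) + 2*π/3 * Real.sqrt ((1-x)/2) * (2+x)

lemma contBase : Continuous base := by
  unfold base
  have h1 : Continuous fun x : ℝ => Real.sqrt ((1+x)/2) :=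
    Real.continuous_sqrt.comp ((continuous_const.add continuous_id).div_const 2)
  have h2 : Continuous fun x : ℝ => Real.sqrt ((1-x)/2) :=
    Real.continuous_sqrt.comp ((continuous_const.sub continuous_id).div_const 2)
  exact (continuous_const.add ((continuous_const.mul h1).mul
    (continuous_const.sub continuous_id))).add
    ((continuous_const.mul h2).mul (continuous_const.add continuous_id))

lemma A3_eq (A3 : ℝ → ℝ)
    (hA3 : ∀ θ ∈ Set.Icc (0:ℝ) π,
      A3 θ = -(2*π/3) * (1 + Real.sin (θ/2) ^ 3)
        + π * ((1/12) * (9 * Real.cos (θ/2) - Real.cos (3*θ/2))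
             + (1/6) * (9 * Real.sin (θ/2) + Real.sin (3*θ/2))))
    (θ : ℝ) (hθ : θ ∈ Set.Icc (0:ℝ) π) : A3 θ = base (Real.cos θ) := by
  obtain ⟨hθ1, hθ2⟩ := hθ
  have hc := Real.cos_half (by linarith [Real.pi_pos] : -π ≤ θ) hθ2
  have hs := Real.sin_half_eq_sqrt hθ1 (by linarith [Real.pi_pos] : θ ≤ 2*π)
  have ha : Real.sqrt ((1 - Real.cos θ)/2) ^ 2 = (1 - Real.cos θ)/2 :=
    Real.sq_sqrt (by nlinarith [Real.cos_le_one θ])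
  have hb : Real.sqrt ((1 + Real.cos θ)/2) ^ 2 = (1 + Real.cos θ)/2 :=
    Real.sq_sqrt (by nlinarith [Real.neg_one_le_cos θ])
  rw [hA3 θ ⟨hθ1, hθ2⟩, show 3*θ/2 = 3*(θ/2) by ring, Real.cos_three_mul, Real.sin_three_mul,
    hc, hs]
  unfold base
  linear_combination (-(4/3)*π*Real.sqrt ((1 - Real.cos θ)/2)) * ha
    + (-(π/3)*Real.sqrt ((1 + Real.cos θ)/2)) * hb

-- master formula
lemma master (A3 : ℝ → ℝ)
    (hA3 : ∀ θ ∈ Set.Icc (0:ℝ) π,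
      A3 θ = -(2*π/3) * (1 + Real.sin (θ/2) ^ 3)
        + π * ((1/12) * (9 * Real.cos (θ/2) - Real.cos (3*θ/2))
             + (1/6) * (9 * Real.sin (θ/2) + Real.sin (3*θ/2)))) (n : ℕ) :
    Real.sqrt 2 * (∫ θ in (0:ℝ)..π, A3 θ * (legendreP n).eval (Real.cos θ) * Real.sin θ)
      = π*(-2/3)*Real.sqrt 2 * J0 n + π*(-1:ℝ)^n*J1 n - (π/6)*(-1:ℝ)^n*J3 n
        + 2*π*J1 n - (2*π/3)*J3 n := by
  have hstep1 : (∫ θ in (0:ℝ)..π, A3 θ * (legendreP n).eval (Real.cos θ) * Real.sin θ)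
      = ∫ θ in (0:ℝ)..π, (fun x => base x * (legendreP n).eval x) (Real.cos θ) * Real.sin θ := by
    apply intervalIntegral.integral_congr
    intro θ hθ
    rw [Set.uIcc_of_le Real.pi_pos.le] at hθ
    simp only
    rw [A3_eq A3 hA3 θ hθ]
  rw [hstep1, subst_cos (fun x => base x * (legendreP n).eval x) (contBase.mul (contP n))]
  rw [← intervalIntegral.integral_const_mul]
  have hstep2 : (∫ x in (-1:ℝ)..1, Real.sqrt 2 * (base x * (legendreP n).eval x))
      = ∫ x in (-1:ℝ)..1,
          ((π*(-2/3)*Real.sqrt 2) * (legendreP n).eval x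
            + π * (Real.sqrt (1+x) * (legendreP n).eval x)
            - (π/6) * ((1+x) * Real.sqrt (1+x) * (legendreP n).eval x)
            + 2*π * (Real.sqrt (1-x) * (legendreP n).eval x)
            - (2*π/3) * ((1-x) * Real.sqrt (1-x) * (legendreP n).eval x)) := by
    apply intervalIntegral.integral_congr
    intro x hx
    rw [Set.uIcc_of_le (by norm_num : (-1:ℝ) ≤ 1)] at hx
    obtain ⟨hx1, hx2⟩ := hx
    have hp : Real.sqrt ((1+x)/2) * Real.sqrt 2 = Real.sqrt (1+x) := by
      rw [← Real.sqrt_mul (by linarith : (0:ℝ) ≤ (1+x)/2)]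
      norm_num
    have hm : Real.sqrt ((1-x)/2) * Real.sqrt 2 = Real.sqrt (1-x) := by
      rw [← Real.sqrt_mul (by linarith : (0:ℝ) ≤ (1-x)/2)]
      norm_num
    simp only
    unfold base
    linear_combination ((π/6)*(5-x)*(legendreP n).eval x) * hp
      + ((2*π/3)*(2+x)*(legendreP n).eval x) * hm
  rw [hstep2]
  have i1 : IntervalIntegrable (fun x : ℝ => (π*(-2/3)*Real.sqrt 2) * (legendreP n).eval x)
      MeasureTheory.volume (-1) 1 := (continuous_const.mul (contP n)).intervalIntegrable _ _
  have i2 : IntervalIntegrable (fun x : ℝ => π * (Real.sqrt (1+x) * (legendreP n).eval x))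
      MeasureTheory.volume (-1) 1 :=
    (continuous_const.mul (contS'.mul (contP n))).intervalIntegrable _ _
  have i3 : IntervalIntegrable (fun x : ℝ => (π/6) * ((1+x) * Real.sqrt (1+x) * (legendreP n).eval x))
      MeasureTheory.volume (-1) 1 :=
    (continuous_const.mul (((continuous_const.add continuous_id).mul contS').mul (contP n))).intervalIntegrable _ _
  have i4 : IntervalIntegrable (fun x : ℝ => 2*π * (Real.sqrt (1-x) * (legendreP n).eval x))
      MeasureTheory.volume (-1) 1 :=
    (continuous_const.mul (contS.mul (contP n))).intervalIntegrable _ _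
  have i5 : IntervalIntegrable (fun x : ℝ => (2*π/3) * ((1-x) * Real.sqrt (1-x) * (legendreP n).eval x))
      MeasureTheory.volume (-1) 1 :=
    (continuous_const.mul ((cont1x.mul contS).mul (contP n))).intervalIntegrable _ _
  rw [intervalIntegral.integral_sub (((i1.add i2).sub i3).add i4) i5,
    intervalIntegral.integral_add ((i1.add i2).sub i3) i4,
    intervalIntegral.integral_sub (i1.add i2) i3,
    intervalIntegral.integral_add i1 i2,
    intervalIntegral.integral_const_mul, intervalIntegral.integral_const_mul,
    intervalIntegral.integral_const_mul, intervalIntegral.integral_const_mul,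
    intervalIntegral.integral_const_mul]
  rw [K1_eq, K3_eq]
  show π*(-2/3)*Real.sqrt 2 * J0 n + π * ((-1:ℝ)^n * J1 n) - π/6 * ((-1:ℝ)^n * J3 n)
      + 2*π * J1 n - 2*π/3 * J3 n = _
  ring

end Leg


theorem stmt_10 (A3 : ℝ → ℝ)
    (hA3 : ∀ θ ∈ Set.Icc (0:ℝ) π,
      A3 θ = -(2*π/3) * (1 + Real.sin (θ/2) ^ 3)
        + π * ((1/12) * (9 * Real.cos (θ/2) - Real.cos (3*θ/2))
             + (1/6) * (9 * Real.sin (θ/2) + Real.sin (3*θ/2)))) :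
    (∀ n : ℕ, 2 ≤ n →
      (∫ θ in (0:ℝ)..π, A3 θ * (legendreP n).eval (Real.cos θ) * Real.sin θ) ≤ 0) ∧
    0 < ∫ θ in (0:ℝ)..π, A3 θ * (legendreP 1).eval (Real.cos θ) * Real.sin θ := by
  have hπ := Real.pi_pos
  have hs2 : (0:ℝ) < Real.sqrt 2 := Real.sqrt_pos.mpr two_pos
  constructor
  · intro n hn
    have hm := Leg.master A3 hA3 n
    have h0 := Leg.cJ0 n (by omega)
    have h1 := Leg.cJ1 n (by omega)
    have h3 := Leg.cJ3 n (by omega)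
    have hcast : (2:ℝ) ≤ (n:ℝ) := by exact_mod_cast hn
    have e0 : (0:ℝ) < 2*(n:ℝ)-3 := by linarith
    have e1 : (0:ℝ) < 2*(n:ℝ)-1 := by linarith
    have e2 : (0:ℝ) < 2*(n:ℝ)+1 := by linarith
    have e3 : (0:ℝ) < 2*(n:ℝ)+3 := by linarith
    have e4 : (0:ℝ) < 2*(n:ℝ)+5 := by linarith
    have hD3 : (0:ℝ) < (2*(n:ℝ)-1)*(2*(n:ℝ)+1)*(2*(n:ℝ)+3) := by positivity
    have hD5 : (0:ℝ) <
        (2*(n:ℝ)-3)*(2*(n:ℝ)-1)*(2*(n:ℝ)+1)*(2*(n:ℝ)+3)*(2*(n:ℝ)+5) := by positivity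
    have hJ1neg : Leg.J1 n < 0 := by
      by_contra h
      push_neg at h
      nlinarith [mul_nonneg h hD3.le]
    have hJ3pos : 0 < Leg.J3 n := by
      by_contra h
      push_neg at h
      nlinarith [mul_nonneg (neg_nonneg.mpr h) hD5.le]
    rw [h0] at hm
    by_contra hT
    push_neg at hT
    rcases Nat.even_or_odd n with he | ho
    · rw [he.neg_one_pow] at hm
      nlinarith [mul_pos hs2 hT, mul_pos hπ hJ3pos, mul_neg_of_pos_of_neg hπ hJ1neg]
    · rw [ho.neg_one_pow] at hm
      nlinarith [mul_pos hs2 hT, mul_pos hπ hJ3pos, mul_neg_of_pos_of_neg hπ hJ1neg]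
  · have hm := Leg.master A3 hA3 1
    rw [Leg.J0_one, Leg.J1_one, Leg.J3_one] at hm
    norm_num at hm
    by_contra hT
    push_neg at hT
    nlinarith [mul_nonneg hs2.le (neg_nonneg.mpr hT), mul_pos hπ hs2]
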